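/- Let K ≥ 3 be an integer, θ_k = 2πk/K for k = 0,…,K−1, and let x̃_k = x_c + (R + f_k)cos θ_k, ỹ_k = y_c + (R + f_k)sin θ_k. Then the triple (x̃_c, ỹ_c, R̃) with x̃_c = x_c + (1/K)∑_{k=0}^{K−1} f_k cos θ_k, ỹ_c = y_c + (1/K)∑_{k=0}^{K−1} f_k sin θ_k, and R̃ = R + (1/K)∑_{k=0}^{K−1} f_k is a global minimizer of the circle-fitting energy: for all (a, b, r) ∈ ℝ³, C(x̃_c, ỹ_c, R̃) ≤ C(a, b, r). -/

import Mathlib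

open Real Finset

lemma sum_exp_zero (K : ℕ) (hK : 2 ≤ K) :
    ∑ k ∈ Finset.range K, Complex.exp (2 * Real.pi * k / K * Complex.I) = 0 := by
  have hKne : (K : ℂ) ≠ 0 := Nat.cast_ne_zero.mpr (by omega)
  set ζ : ℂ := Complex.exp (2 * Real.pi / K * Complex.I) with hζ
  have hpow : ∀ k : ℕ, Complex.exp (2 * Real.pi * k / K * Complex.I) = ζ ^ k := by
    intro k
    rw [hζ, ← Complex.exp_nat_mul]
    ring_nf
  have hζK : ζ ^ K = 1 := by
    rw [hζ, ← Complex.exp_nat_mul]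
    rw [show (K : ℂ) * (2 * Real.pi / K * Complex.I) = 2 * Real.pi * Complex.I by
      field_simp]
    simpa using Complex.exp_int_mul_two_pi_mul_I 1
  have hζ1 : ζ ≠ 1 := by
    intro h
    rw [hζ, Complex.exp_eq_one_iff] at h
    obtain ⟨n, hn⟩ := h
    have h2 : (2 * Real.pi * Complex.I : ℂ) ≠ 0 := by
      simp [Real.pi_ne_zero, Complex.I_ne_zero]
    have hn' : (1 : ℂ) = n * K := by
      field_simp at hn
      have := mul_right_cancel₀ h2 (by linear_combination (2 * Real.pi * Complex.I) * hn : (1 : ℂ) * (2 * Real.pi * Complex.I) = (n * K) * (2 * Real.pi * Complex.I))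
      exact this
    have hz : (n * K : ℤ) = 1 := by exact_mod_cast (by push_cast; exact hn'.symm : ((n * K : ℤ) : ℂ) = 1)
    have hdvd : (K : ℤ) ∣ 1 := Dvd.intro n (by linarith [hz])
    have := Int.le_of_dvd one_pos hdvd
    omega
  calc ∑ k ∈ Finset.range K, Complex.exp (2 * Real.pi * k / K * Complex.I)
      = ∑ k ∈ Finset.range K, ζ ^ k := by simp [hpow]
    _ = (ζ ^ K - 1) / (ζ - 1) := geom_sum_eq hζ1 K
    _ = 0 := by rw [hζK]; simp

lemma sum_cos_zero (K : ℕ) (hK : 2 ≤ K) :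
    ∑ k ∈ Finset.range K, Real.cos (2 * Real.pi * k / K) = 0 := by
  have h := sum_exp_zero K hK
  have h' : ∑ k ∈ Finset.range K,
      ((Real.cos (2 * Real.pi * k / K) : ℂ) + Real.sin (2 * Real.pi * k / K) * Complex.I) = 0 := by
    rw [← h]
    refine Finset.sum_congr rfl fun k _ => ?_
    rw [Complex.exp_mul_I, Complex.ofReal_cos, Complex.ofReal_sin]
    norm_cast
  have hre := congrArg Complex.re h'
  simp only [Complex.re_sum, Complex.add_re, Complex.mul_re, Complex.ofReal_re,
    Complex.ofReal_im, Complex.I_re, Complex.I_im, Complex.zero_re,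
    mul_zero, zero_mul, sub_zero, add_zero, mul_one] at hre
  exact hre

lemma sum_sin_zero (K : ℕ) (hK : 2 ≤ K) :
    ∑ k ∈ Finset.range K, Real.sin (2 * Real.pi * k / K) = 0 := by
  have h := sum_exp_zero K hK
  have h' : ∑ k ∈ Finset.range K,
      ((Real.cos (2 * Real.pi * k / K) : ℂ) + Real.sin (2 * Real.pi * k / K) * Complex.I) = 0 := by
    rw [← h]
    refine Finset.sum_congr rfl fun k _ => ?_
    rw [Complex.exp_mul_I, Complex.ofReal_cos, Complex.ofReal_sin]
    norm_cast
  have him := congrArg Complex.im h'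
  simp only [Complex.im_sum, Complex.add_im, Complex.mul_im, Complex.ofReal_re,
    Complex.ofReal_im, Complex.I_re, Complex.I_im, Complex.zero_im,
    mul_zero, zero_mul, zero_add, add_zero, mul_one] at him
  exact him

/-- The triple (shifted-average center, radius updated by the average force)
is a global minimizer of the circle-fitting energy. -/
theorem global_minimizer
    (K : ℕ) (hK : 3 ≤ K) (xc yc R : ℝ) (f : ℕ → ℝ)
    (θ : ℕ → ℝ) (hθ : ∀ k, θ k = 2 * Real.pi * k / K)
    (xt yt : ℕ → ℝ)
    (hxt : ∀ k, xt k = xc + (R + f k) * Real.cos (θ k))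
    (hyt : ∀ k, yt k = yc + (R + f k) * Real.sin (θ k))
    (C : ℝ → ℝ → ℝ → ℝ)
    (hC : ∀ a b r, C a b r =
      ∑ k ∈ Finset.range K,
        ((xt k - a - r * Real.cos (θ k)) ^ 2 + (yt k - b - r * Real.sin (θ k)) ^ 2))
    (xtc ytc Rt : ℝ)
    (hxtc : xtc = xc + (1 / (K : ℝ)) * ∑ k ∈ Finset.range K, f k * Real.cos (θ k))
    (hytc : ytc = yc + (1 / (K : ℝ)) * ∑ k ∈ Finset.range K, f k * Real.sin (θ k))
    (hRt : Rt = R + (1 / (K : ℝ)) * ∑ k ∈ Finset.range K, f k) :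
    ∀ a b r : ℝ, C xtc ytc Rt ≤ C a b r := by
  intro a b r
  have hKpos : (0 : ℝ) < K := by
    have : 0 < K := by omega
    exact_mod_cast this
  have hc0 : ∑ k ∈ Finset.range K, Real.cos (θ k) = 0 := by
    rw [Finset.sum_congr rfl fun k _ => by rw [hθ]]
    exact sum_cos_zero K (by omega)
  have hs0 : ∑ k ∈ Finset.range K, Real.sin (θ k) = 0 := by
    rw [Finset.sum_congr rfl fun k _ => by rw [hθ]]
    exact sum_sin_zero K (by omega)
  set S1 := ∑ k ∈ Finset.range K, f k * Real.cos (θ k) with hS1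
  set S2 := ∑ k ∈ Finset.range K, f k * Real.sin (θ k) with hS2
  set S3 := ∑ k ∈ Finset.range K, f k with hS3
  set S4 := ∑ k ∈ Finset.range K, (f k) ^ 2 with hS4
  have key : ∀ a b r : ℝ, C a b r =
      (K : ℝ) * ((xc - a) ^ 2 + (yc - b) ^ 2 + (R - r) ^ 2) + 2 * (R - r) * S3 + S4
        + 2 * (xc - a) * S1 + 2 * (yc - b) * S2 := by
    intro a b r
    rw [hC]
    have expand : ∀ k ∈ Finset.range K,
        (xt k - a - r * Real.cos (θ k)) ^ 2 + (yt k - b - r * Real.sin (θ k)) ^ 2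
        = (((xc - a) ^ 2 + (yc - b) ^ 2 + (R - r) ^ 2) + ((f k) ^ 2 + (2 * (R - r)) * f k)
          + (2 * (xc - a)) * (f k * Real.cos (θ k)) + (2 * (yc - b)) * (f k * Real.sin (θ k))
          + (2 * (xc - a) * (R - r)) * Real.cos (θ k)
          + (2 * (yc - b) * (R - r)) * Real.sin (θ k)) := by
      intro k _
      rw [hxt, hyt]
      linear_combination (R + f k - r) ^ 2 * (Real.sin_sq_add_cos_sq (θ k))
    rw [Finset.sum_congr rfl expand]
    simp only [Finset.sum_add_distrib, ← Finset.mul_sum, Finset.sum_const,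
      Finset.card_range, nsmul_eq_mul, hc0, hs0, mul_zero]
    ring
  have hdiff : C a b r - C xtc ytc Rt
      = (K : ℝ) * ((a - xtc) ^ 2 + (b - ytc) ^ 2 + (r - Rt) ^ 2) := by
    rw [key a b r, key xtc ytc Rt, hxtc, hytc, hRt]
    field_simp
    ring
  nlinarith [sq_nonneg (a - xtc), sq_nonneg (b - ytc), sq_nonneg (r - Rt), hKpos]
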